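/- Let n ≥ 1, let A and B be Hermitian n×n complex matrices all of whose eigenvalues lie in the open interval (−1,1), let f, g ∈ 𝔥, and let X be an arbitrary n×n complex matrix. Then for each choice of sign ε ∈ {+1, −1}, ‖f(A)X + ε·Xg(B)‖₂ ≤ ‖(1/d_A)(X + |A|X) + (1/d_B)(X + X|B|)‖₂. -/

import Mathlib

open Matrix
open scoped ComplexOrder

/-- `f(A)` for a Hermitian matrix `A`, defined via the spectral decomposition:
`f(A) = U diag(f(λ₁),…,f(λₙ)) U*`. -/
noncomputable def herFun {n : ℕ} {A : Matrix (Fin n) (Fin n) ℂ} (hA : A.IsHermitian)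
    (f : ℂ → ℂ) : Matrix (Fin n) (Fin n) ℂ :=
  (hA.eigenvectorUnitary : Matrix (Fin n) (Fin n) ℂ) *
    Matrix.diagonal (fun i => f (hA.eigenvalues i : ℂ)) *
    star (hA.eigenvectorUnitary : Matrix (Fin n) (Fin n) ℂ)

/-- `|X| = (X*X)^{1/2}`, the positive semidefinite absolute value of a matrix. -/
noncomputable def matAbs {n : ℕ} (X : Matrix (Fin n) (Fin n) ℂ) : Matrix (Fin n) (Fin n) ℂ :=
  ((Matrix.posSemidef_conjTranspose_mul_self X).1.eigenvectorUnitary : Matrix (Fin n) (Fin n) ℂ) *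
    Matrix.diagonal (fun i =>
      ((Real.sqrt ((Matrix.posSemidef_conjTranspose_mul_self X).1.eigenvalues i) : ℝ) : ℂ)) *
    star ((Matrix.posSemidef_conjTranspose_mul_self X).1.eigenvectorUnitary :
      Matrix (Fin n) (Fin n) ℂ)

/-- `d_A = min { 1 - |λⱼ| }`, the distance from the unit circle to the spectrum of a
Hermitian matrix `A` whose eigenvalues lie in `(-1,1)`. -/
noncomputable def dDist {n : ℕ} {A : Matrix (Fin n) (Fin n) ℂ} (hA : A.IsHermitian) : ℝ :=
  ⨅ i, (1 - |hA.eigenvalues i|)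

/-- Membership in the class `𝔥`: analytic on the open unit disk, positive real part there,
and value `1` at the origin. -/
def MemH (f : ℂ → ℂ) : Prop :=
  DifferentiableOn ℂ f (Metric.ball (0 : ℂ) 1) ∧
    (∀ z ∈ Metric.ball (0 : ℂ) 1, 0 < (f z).re) ∧ f 0 = 1

/-- A function `N` on `n × n` complex matrices is a unitarily invariant norm. -/
def IsUnitarilyInvariantNorm {m : Type*} [Fintype m] [DecidableEq m]
    (N : Matrix m m ℂ → ℝ) : Prop :=
  (∀ X, N X = 0 ↔ X = 0) ∧
    (∀ (c : ℂ) X, N (c • X) = ‖c‖ * N X) ∧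
    (∀ X Y, N (X + Y) ≤ N X + N Y) ∧
    (∀ (U V : Matrix.unitaryGroup m ℂ) (X : Matrix m m ℂ),
      N ((U : Matrix m m ℂ) * X * (V : Matrix m m ℂ)) = N X)
/-- The Frobenius (Hilbert–Schmidt, Schatten 2-) norm of a matrix. -/
noncomputable def frobNorm {n : ℕ} (X : Matrix (Fin n) (Fin n) ℂ) : ℝ :=
  Real.sqrt (∑ i, ∑ j, ‖X i j‖ ^ 2)

/-- Carathéodory-type bound for functions in the class `𝔥`. -/
lemma carath {f : ℂ → ℂ} (hf : MemH f) {t : ℝ} (ht : |t| < 1) :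
    ‖f t‖ ≤ (1 + |t|) / (1 - |t|) := by
  obtain ⟨hdiff, hre, h0⟩ := hf
  set D := Metric.ball (0 : ℂ) 1 with hD
  have hden : ∀ z ∈ D, f z + 1 ≠ 0 := by
    intro z hz h
    have : (f z + 1).re = (f z).re + 1 := by simp
    rw [h] at this
    simp at this
    linarith [hre z hz]
  set φ : ℂ → ℂ := fun z => (f z - 1) / (f z + 1) with hφ
  have hφdiff : DifferentiableOn ℂ φ D :=
    (hdiff.sub (differentiableOn_const 1)).div (hdiff.add (differentiableOn_const 1)) hden
  have hφ0 : φ 0 = 0 := by simp [hφ, h0]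
  have hmaps : Set.MapsTo φ D D := by
    intro z hz
    have hrez := hre z hz
    have hlt : ‖f z - 1‖ < ‖f z + 1‖ := by
      have h1 : ‖f z - 1‖ ^ 2 < ‖f z + 1‖ ^ 2 := by
        rw [Complex.sq_norm, Complex.sq_norm,
          Complex.normSq_apply, Complex.normSq_apply]
        simp only [Complex.sub_re, Complex.sub_im, Complex.add_re, Complex.add_im,
          Complex.one_re, Complex.one_im]
        nlinarith
      exact lt_of_pow_lt_pow_left₀ 2 (norm_nonneg _) h1
    rw [hD, Metric.mem_ball, dist_zero_right]
    rw [hφ]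
    simp only [norm_div]
    rw [div_lt_one (lt_of_le_of_lt (norm_nonneg _) hlt)]
    exact hlt
  have htD : ‖(t : ℂ)‖ < 1 := by rwa [Complex.norm_real, Real.norm_eq_abs]
  have hschwarz : ‖φ t‖ ≤ ‖(t : ℂ)‖ :=
    Complex.norm_le_norm_of_mapsTo_ball hφdiff (hmaps.mono_right Metric.ball_subset_closedBall) hφ0 htD
  have hs : ‖φ (t : ℂ)‖ ≤ |t| := by
    simpa using hschwarz
  have hslt : ‖φ (t : ℂ)‖ < 1 := lt_of_le_of_lt hs ht
  have hne1 : (1 : ℂ) - φ t ≠ 0 := by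
    intro h
    have : φ (t : ℂ) = 1 := by linear_combination -h
    rw [this] at hslt; simp at hslt
  have htmem : (t : ℂ) ∈ D := by
    rwa [hD, Metric.mem_ball, dist_zero_right, Complex.norm_real, Real.norm_eq_abs]
  have he : φ (t : ℂ) * (f t + 1) = f t - 1 := div_mul_cancel₀ _ (hden _ htmem)
  have hft : f t = (1 + φ t) / (1 - φ t) := by
    rw [eq_div_iff hne1]
    linear_combination -he
  rw [hft, norm_div]
  have h1 : ‖(1 : ℂ) + φ t‖ ≤ 1 + ‖φ t‖ := by
    calc ‖(1 : ℂ) + φ t‖ ≤ ‖(1:ℂ)‖ + ‖φ t‖ := norm_add_le _ _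
    _ = 1 + ‖φ t‖ := by simp
  have h2 : 1 - ‖φ t‖ ≤ ‖(1 : ℂ) - φ t‖ := by
    have := norm_sub_norm_le (1 : ℂ) (φ t)
    simpa using this
  have hpos : (0:ℝ) < 1 - ‖φ t‖ := by linarith
  calc ‖(1:ℂ) + φ t‖ / ‖(1:ℂ) - φ t‖ ≤ (1 + ‖φ t‖) / (1 - ‖φ t‖) :=
        div_le_div₀ (by positivity) h1 hpos h2
    _ ≤ (1 + |t|) / (1 - |t|) := by
        rw [div_le_div_iff₀ hpos (by linarith)]
        nlinarith [abs_nonneg t, norm_nonneg (φ (t:ℂ))]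

lemma frobNorm_eq_trace {n : ℕ} (M : Matrix (Fin n) (Fin n) ℂ) :
    frobNorm M = Real.sqrt ((Mᴴ * M).trace.re) := by
  unfold frobNorm
  congr 1
  have h : (Mᴴ * M).trace = ∑ j, ∑ i, (starRingEnd ℂ) (M i j) * M i j := by
    rw [Matrix.trace]
    simp [Matrix.diag, Matrix.mul_apply, Matrix.conjTranspose_apply]
  rw [h, Complex.re_sum, Finset.sum_comm]
  congr 1; ext i
  rw [Complex.re_sum]
  congr 1; ext j
  rw [Complex.conj_mul']; norm_cast

lemma frob_mono {n : ℕ} (M N : Matrix (Fin n) (Fin n) ℂ)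
    (h : ∀ i j, ‖M i j‖ ≤ ‖N i j‖) : frobNorm M ≤ frobNorm N := by
  apply Real.sqrt_le_sqrt
  apply Finset.sum_le_sum
  intro i _
  apply Finset.sum_le_sum
  intro j _
  exact pow_le_pow_left₀ (norm_nonneg _) (h i j) 2

lemma frob_unitary {n : ℕ} (U V M : Matrix (Fin n) (Fin n) ℂ)
    (hU : star U * U = 1) (hV : V * star V = 1) :
    frobNorm (U * M * V) = frobNorm M := by
  rw [frobNorm_eq_trace, frobNorm_eq_trace]
  congr 2
  have h1 : (U * M * V)ᴴ * (U * M * V) = Vᴴ * (Mᴴ * M * V) := by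
    rw [conjTranspose_mul, conjTranspose_mul]
    calc Vᴴ * (Mᴴ * Uᴴ) * (U * M * V) = Vᴴ * (Mᴴ * ((Uᴴ * U) * (M * V))) := by
          simp only [Matrix.mul_assoc]
      _ = Vᴴ * (Mᴴ * M * V) := by
          have hU' : Uᴴ * U = 1 := hU
          rw [hU', Matrix.one_mul, Matrix.mul_assoc]
  have hV' : V * Vᴴ = 1 := hV
  rw [h1, Matrix.trace_mul_comm, Matrix.mul_assoc, hV', Matrix.mul_one]

lemma matAbs_eq {n : ℕ} {A : Matrix (Fin n) (Fin n) ℂ} (hA : A.IsHermitian) :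
    matAbs A = (hA.eigenvectorUnitary : Matrix (Fin n) (Fin n) ℂ) *
      Matrix.diagonal (fun i => Complex.ofReal |hA.eigenvalues i|) *
      star (hA.eigenvectorUnitary : Matrix (Fin n) (Fin n) ℂ) := by
  set U : Matrix (Fin n) (Fin n) ℂ := (hA.eigenvectorUnitary : Matrix (Fin n) (Fin n) ℂ) with hUdef
  set S : Matrix (Fin n) (Fin n) ℂ :=
    U * Matrix.diagonal (fun i => Complex.ofReal |hA.eigenvalues i|) * star U with hSdef
  have hUU : star U * U = 1 := Matrix.UnitaryGroup.star_mul_self _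
  have hS : S.PosSemidef := by
    have hd : (Matrix.diagonal (fun i => Complex.ofReal |hA.eigenvalues i|)).PosSemidef := by
      rw [Matrix.posSemidef_diagonal_iff]
      intro i
      rw [Complex.zero_le_real]
      exact abs_nonneg _
    exact hd.mul_mul_conjTranspose_same U
  have key : ∀ d e : Fin n → ℂ, (U * Matrix.diagonal d * star U) * (U * Matrix.diagonal e * star U)
      = U * Matrix.diagonal (fun i => d i * e i) * star U := by
    intro d e
    have h1 : star U * (U * (Matrix.diagonal e * star U)) = Matrix.diagonal e * star U := by
      rw [← Matrix.mul_assoc, hUU, Matrix.one_mul]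
    calc (U * Matrix.diagonal d * star U) * (U * Matrix.diagonal e * star U)
        = U * (Matrix.diagonal d * (star U * (U * (Matrix.diagonal e * star U)))) := by
          simp only [Matrix.mul_assoc]
      _ = U * (Matrix.diagonal d * (Matrix.diagonal e * star U)) := by rw [h1]
      _ = U * Matrix.diagonal (fun i => d i * e i) * star U := by
          rw [← Matrix.mul_assoc (Matrix.diagonal d), Matrix.diagonal_mul_diagonal]
          simp only [Matrix.mul_assoc]
  have hsq : S ^ 2 = Aᴴ * A := by
    have hAH : Aᴴ = A := hA
    rw [hAH, pow_two, hSdef]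
    conv_rhs => rw [hA.spectral_theorem, Unitary.conjStarAlgAut_apply]
    rw [key, key]
    have harg : (fun i => Complex.ofReal |hA.eigenvalues i| * Complex.ofReal |hA.eigenvalues i|)
        = fun i => (RCLike.ofReal ∘ hA.eigenvalues) i * (RCLike.ofReal ∘ hA.eigenvalues) i := by
      funext i
      simp only [Function.comp_apply]
      rw [show (RCLike.ofReal : ℝ → ℂ) = Complex.ofReal from rfl, ← Complex.ofReal_mul,
        ← Complex.ofReal_mul, abs_mul_abs_self]
    rw [harg]
  have hAA := (Matrix.posSemidef_conjTranspose_mul_self A).1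
  have hAHA : Aᴴ * A = cfc (fun x : ℝ => x * x) A := by
    have hAH : Aᴴ = A := hA
    rw [hAH, cfc_mul (fun x : ℝ => x) (fun x : ℝ => x) A, cfc_id' ℝ A]
  have e1 : matAbs A = cfc Real.sqrt (Aᴴ * A) := by
    rw [hAA.cfc_eq]
    unfold matAbs Matrix.IsHermitian.cfc
    rw [Unitary.conjStarAlgAut_apply]
    rfl
  have e2 : S = cfc (fun x : ℝ => |x|) A := by
    rw [hA.cfc_eq]
    unfold Matrix.IsHermitian.cfc
    rw [Unitary.conjStarAlgAut_apply]
    rfl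
  rw [e1, e2, hAHA, ← cfc_comp Real.sqrt (fun x : ℝ => x * x) A]
  congr 1
  funext x
  exact Real.sqrt_mul_self_eq_abs x

lemma dDist_pos {n : ℕ} (hn : 1 ≤ n) {A : Matrix (Fin n) (Fin n) ℂ} (hA : A.IsHermitian)
    (hAspec : ∀ i, |hA.eigenvalues i| < 1) : 0 < dDist hA := by
  haveI : Nonempty (Fin n) := Fin.pos_iff_nonempty.mp hn
  obtain ⟨i0, hi0⟩ := Finite.exists_min (fun i => 1 - |hA.eigenvalues i|)
  have : (0:ℝ) < 1 - |hA.eigenvalues i0| := by linarith [hAspec i0]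
  exact lt_of_lt_of_le this (le_ciInf hi0)

lemma dDist_le {n : ℕ} {A : Matrix (Fin n) (Fin n) ℂ} (hA : A.IsHermitian) (i : Fin n) :
    dDist hA ≤ 1 - |hA.eigenvalues i| :=
  ciInf_le (Set.Finite.bddBelow (Set.finite_range _)) i

/-- **Theorem 3.3 (first inequality).** -/
theorem stmt13 {n : ℕ} (hn : 1 ≤ n)
    {A B : Matrix (Fin n) (Fin n) ℂ} (hA : A.IsHermitian) (hB : B.IsHermitian)
    (hAspec : ∀ i, |hA.eigenvalues i| < 1) (hBspec : ∀ i, |hB.eigenvalues i| < 1)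
    {f g : ℂ → ℂ} (hf : MemH f) (hg : MemH g)
    (X : Matrix (Fin n) (Fin n) ℂ) (ε : ℂ) (hε : ε = 1 ∨ ε = -1) :
    frobNorm (herFun hA f * X + ε • (X * herFun hB g)) ≤
      frobNorm ((dDist hA)⁻¹ • (X + matAbs A * X) + (dDist hB)⁻¹ • (X + X * matAbs B)) := by
  haveI : Nonempty (Fin n) := Fin.pos_iff_nonempty.mp hn
  set U : Matrix (Fin n) (Fin n) ℂ := (hA.eigenvectorUnitary : Matrix (Fin n) (Fin n) ℂ) with hUdef
  set V : Matrix (Fin n) (Fin n) ℂ := (hB.eigenvectorUnitary : Matrix (Fin n) (Fin n) ℂ) with hVdef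
  have hUU : star U * U = 1 := Matrix.UnitaryGroup.star_mul_self _
  have hVV : star V * V = 1 := Matrix.UnitaryGroup.star_mul_self _
  have hUU' : U * star U = 1 := (Matrix.mem_unitaryGroup_iff).mp hA.eigenvectorUnitary.2
  have hVV' : V * star V = 1 := (Matrix.mem_unitaryGroup_iff).mp hB.eigenvectorUnitary.2
  set Y : Matrix (Fin n) (Fin n) ℂ := star U * X * V with hYdef
  set Df : Matrix (Fin n) (Fin n) ℂ :=
    Matrix.diagonal (fun i => f (hA.eigenvalues i : ℂ)) with hDfdef
  set Dg : Matrix (Fin n) (Fin n) ℂ :=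
    Matrix.diagonal (fun i => g (hB.eigenvalues i : ℂ)) with hDgdef
  set Da : Matrix (Fin n) (Fin n) ℂ :=
    Matrix.diagonal (fun i => Complex.ofReal |hA.eigenvalues i|) with hDadef
  set Db : Matrix (Fin n) (Fin n) ℂ :=
    Matrix.diagonal (fun i => Complex.ofReal |hB.eigenvalues i|) with hDbdef
  have hdA : 0 < dDist hA := dDist_pos hn hA hAspec
  have hdB : 0 < dDist hB := dDist_pos hn hB hBspec
  -- matrix identities
  have h1 : herFun hA f * X = U * (Df * Y) * star V := by
    show U * Df * star U * X = _
    simp only [hYdef, Matrix.mul_assoc]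
    rw [hVV', Matrix.mul_one]
  have h2 : X * herFun hB g = U * (Y * Dg) * star V := by
    show X * (V * Dg * star V) = _
    simp only [hYdef, Matrix.mul_assoc]
    rw [← Matrix.mul_assoc U (star U), hUU', Matrix.one_mul]
  have h3 : X = U * Y * star V := by
    simp only [hYdef, Matrix.mul_assoc]
    rw [hVV', Matrix.mul_one, ← Matrix.mul_assoc U (star U), hUU', Matrix.one_mul]
  have h4 : matAbs A * X = U * (Da * Y) * star V := by
    rw [matAbs_eq hA, ← hUdef, ← hDadef]
    simp only [hYdef, Matrix.mul_assoc]
    rw [hVV', Matrix.mul_one]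
  have h5 : X * matAbs B = U * (Y * Db) * star V := by
    rw [matAbs_eq hB, ← hVdef, ← hDbdef]
    simp only [hYdef, Matrix.mul_assoc]
    rw [← Matrix.mul_assoc U (star U), hUU', Matrix.one_mul]
  have hL : herFun hA f * X + ε • (X * herFun hB g) = U * (Df * Y + ε • (Y * Dg)) * star V := by
    rw [Matrix.mul_add, Matrix.add_mul, Matrix.mul_smul, Matrix.smul_mul, ← h1, ← h2]
  have hRa : X + matAbs A * X = U * (Y + Da * Y) * star V := by
    rw [Matrix.mul_add, Matrix.add_mul, ← h3, ← h4]
  have hRb : X + X * matAbs B = U * (Y + Y * Db) * star V := by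
    rw [Matrix.mul_add, Matrix.add_mul, ← h3, ← h5]
  have hR : (dDist hA)⁻¹ • (X + matAbs A * X) + (dDist hB)⁻¹ • (X + X * matAbs B)
      = U * ((dDist hA)⁻¹ • (Y + Da * Y) + (dDist hB)⁻¹ • (Y + Y * Db)) * star V := by
    rw [Matrix.mul_add, Matrix.add_mul, Matrix.mul_smul, Matrix.smul_mul,
      Matrix.mul_smul, Matrix.smul_mul, ← hRa, ← hRb]
  have hsVV : star V * star (star V) = 1 := by rw [star_star]; exact hVV
  rw [hL, hR, frob_unitary _ _ _ hUU hsVV, frob_unitary _ _ _ hUU hsVV]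
  -- entrywise comparison
  apply frob_mono
  intro i j
  have hεn : ‖ε‖ = 1 := by rcases hε with h | h <;> simp [h]
  set y : ℂ := Y i j with hy
  set a : ℝ := |hA.eigenvalues i| with ha
  set b : ℝ := |hB.eigenvalues j| with hb
  have ha0 : 0 ≤ a := abs_nonneg _
  have hb0 : 0 ≤ b := abs_nonneg _
  set r : ℝ := (dDist hA)⁻¹ with hr
  set s : ℝ := (dDist hB)⁻¹ with hs
  have hr0 : 0 ≤ r := by positivity
  have hs0 : 0 ≤ s := by positivity
  have hentL : (Df * Y + ε • (Y * Dg)) i j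
      = f (hA.eigenvalues i : ℂ) * y + ε * (y * g (hB.eigenvalues j : ℂ)) := by
    simp [hDfdef, hDgdef, Matrix.add_apply, Matrix.smul_apply, Matrix.diagonal_mul,
      Matrix.mul_diagonal, smul_eq_mul, hy]
  have hentR : ((dDist hA)⁻¹ • (Y + Da * Y) + (dDist hB)⁻¹ • (Y + Y * Db)) i j
      = ((r * (1 + a) + s * (1 + b) : ℝ) : ℂ) * y := by
    simp only [Matrix.add_apply, Matrix.smul_apply, hDadef, hDbdef, Matrix.diagonal_mul,
      Matrix.mul_diagonal, ← hy, ← ha, ← hb, ← hr, ← hs]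
    rw [Complex.real_smul, Complex.real_smul]
    push_cast
    ring
  rw [hentL, hentR]
  have hcoef : 0 ≤ r * (1 + a) + s * (1 + b) := by positivity
  have hRnorm : ‖((r * (1 + a) + s * (1 + b) : ℝ) : ℂ) * y‖
      = (r * (1 + a) + s * (1 + b)) * ‖y‖ := by
    rw [norm_mul, Complex.norm_real, Real.norm_eq_abs, abs_of_nonneg hcoef]
  rw [hRnorm]
  have hfb : ‖f (hA.eigenvalues i : ℂ)‖ ≤ r * (1 + a) := by
    have h1 := carath hf (hAspec i)
    have h2 : (1 + a) / (1 - a) ≤ (1 + a) / dDist hA :=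
      div_le_div_of_nonneg_left (by linarith) hdA (dDist_le hA i)
    calc ‖f (hA.eigenvalues i : ℂ)‖ ≤ (1 + a) / (1 - a) := h1
      _ ≤ (1 + a) / dDist hA := h2
      _ = r * (1 + a) := by rw [hr, div_eq_inv_mul]
  have hgb : ‖g (hB.eigenvalues j : ℂ)‖ ≤ s * (1 + b) := by
    have h1 := carath hg (hBspec j)
    have h2 : (1 + b) / (1 - b) ≤ (1 + b) / dDist hB :=
      div_le_div_of_nonneg_left (by linarith) hdB (dDist_le hB j)
    calc ‖g (hB.eigenvalues j : ℂ)‖ ≤ (1 + b) / (1 - b) := h1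
      _ ≤ (1 + b) / dDist hB := h2
      _ = s * (1 + b) := by rw [hs, div_eq_inv_mul]
  calc ‖f (hA.eigenvalues i : ℂ) * y + ε * (y * g (hB.eigenvalues j : ℂ))‖
      ≤ ‖f (hA.eigenvalues i : ℂ) * y‖ + ‖ε * (y * g (hB.eigenvalues j : ℂ))‖ := norm_add_le _ _
    _ = ‖f (hA.eigenvalues i : ℂ)‖ * ‖y‖ + ‖y‖ * ‖g (hB.eigenvalues j : ℂ)‖ := by
        rw [norm_mul, norm_mul, norm_mul, hεn, one_mul]
    _ ≤ (r * (1 + a)) * ‖y‖ + ‖y‖ * (s * (1 + b)) :=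
        add_le_add (mul_le_mul_of_nonneg_right hfb (norm_nonneg y))
          (mul_le_mul_of_nonneg_left hgb (norm_nonneg y))
    _ = (r * (1 + a) + s * (1 + b)) * ‖y‖ := by ring
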